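/- Sign of the overall effect in the Markov case: let (λ⋆⁰, λ₀⁰, λ₁⁰) and (λ⋆¹, λ₀¹, λ₁¹) be two triples of continuous nonnegative hazards (Markov case) with λ⋆¹ ≤ λ⋆⁰, λ₀¹ ≤ λ₀⁰ and λ₁¹ ≤ λ₁⁰ pointwise on [0,∞), and suppose λ₁¹(t) ≥ λ₀¹(t) for all t ≥ 0. Let F⁰ and F¹ be the counterfactual cumulative incidence functions associated with the two triples. Then F¹(t) ≤ F⁰(t) for all t ≥ 0, i.e. the overall effect F¹(t) − F⁰(t) is nonpositive at every time. -/

import Mathlib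

open MeasureTheory ProbabilityTheory Filter Set

/-- Cumulative hazard `Λ(t) = ∫₀ᵗ λ(u) du`. -/
noncomputable def cumHaz (lam : ℝ → ℝ) (t : ℝ) : ℝ := ∫ u in (0:ℝ)..t, lam u

/-- Post-intermediate cumulative hazard `Λ₁(t,s) = ∫ₛᵗ λ₁(u,s) du`. -/
noncomputable def cumHaz1 (lam1 : ℝ → ℝ → ℝ) (t s : ℝ) : ℝ := ∫ u in s..t, lam1 u s

/-- The counterfactual cumulative incidence function
`F(t) = ∫₀ᵗ e^{−Λ₀(s)−Λ⋆(s)} λ₀(s) ds + ∫₀ᵗ e^{−Λ₀(s)−Λ⋆(s)} λ⋆(s) (1 − e^{−Λ₁(t,s)}) ds`. -/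
noncomputable def cif (lamS lam0 : ℝ → ℝ) (lam1 : ℝ → ℝ → ℝ) (t : ℝ) : ℝ :=
  (∫ s in (0:ℝ)..t, Real.exp (-cumHaz lam0 s - cumHaz lamS s) * lam0 s) +
  ∫ s in (0:ℝ)..t, Real.exp (-cumHaz lam0 s - cumHaz lamS s) * lamS s *
    (1 - Real.exp (-cumHaz1 lam1 t s))

lemma cumHaz_hasDerivAt {f : ℝ → ℝ} (hf : Continuous f) (t : ℝ) :
    HasDerivAt (cumHaz f) (f t) t :=
  intervalIntegral.integral_hasDerivAt_right (hf.intervalIntegrable _ _)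
    (hf.stronglyMeasurableAtFilter _ _) hf.continuousAt

lemma cumHaz_continuous {f : ℝ → ℝ} (hf : Continuous f) : Continuous (cumHaz f) :=
  continuous_iff_continuousAt.2 fun t => (cumHaz_hasDerivAt hf t).continuousAt

lemma cumHaz_zero (f : ℝ → ℝ) : cumHaz f 0 = 0 := by simp [cumHaz]
lemma cumHaz1_markov {c : ℝ → ℝ} (hc : Continuous c) (t s : ℝ) :
    cumHaz1 (fun u _ => c u) t s = cumHaz c t - cumHaz c s := by
  rw [cumHaz1, cumHaz, cumHaz, ← intervalIntegral.integral_interval_sub_left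
    (hc.intervalIntegrable _ _) (hc.intervalIntegrable _ _)]

lemma cif_formula {a b c : ℝ → ℝ} (ha : Continuous a) (hb : Continuous b)
    (hc : Continuous c) (t : ℝ) :
    cif a b (fun u _ => c u) t = 1 - Real.exp (-cumHaz c t) *
      (1 + ∫ s in (0:ℝ)..t,
        (c s - b s) * Real.exp (cumHaz c s - cumHaz b s - cumHaz a s)) := by
  have hA := cumHaz_continuous ha
  have hB := cumHaz_continuous hb
  have hC := cumHaz_continuous hc
  have hD : Continuous (fun s => Real.exp (-cumHaz b s - cumHaz a s)) := by fun_prop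
  have hE : Continuous (fun s => Real.exp (cumHaz c s - cumHaz b s - cumHaz a s)) := by fun_prop
  -- FTC fact 1 : ∫₀ᵗ D (b+a) = 1 - D t
  have H1 : (∫ s in (0:ℝ)..t, Real.exp (-cumHaz b s - cumHaz a s) * (b s + a s))
      = 1 - Real.exp (-cumHaz b t - cumHaz a t) := by
    have : ∀ s : ℝ, HasDerivAt (fun u => -Real.exp (-cumHaz b u - cumHaz a u))
        (Real.exp (-cumHaz b s - cumHaz a s) * (b s + a s)) s := by
      intro s
      have h := (((cumHaz_hasDerivAt hb s).neg.sub (cumHaz_hasDerivAt ha s)).exp).neg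
      simp only [Pi.sub_apply, Pi.neg_apply] at h
      exact h.congr_deriv (by ring)
    rw [intervalIntegral.integral_eq_sub_of_hasDerivAt (fun s _ => this s)
      ((hD.mul (hb.add ha)).intervalIntegrable _ _)]
    simp [cumHaz_zero]; ring
  -- FTC fact 2 : ∫₀ᵗ (c-b-a) E = E t - 1
  have H2 : (∫ s in (0:ℝ)..t, (c s - b s - a s) * Real.exp (cumHaz c s - cumHaz b s - cumHaz a s))
      = Real.exp (cumHaz c t - cumHaz b t - cumHaz a t) - 1 := by
    have : ∀ s : ℝ, HasDerivAt (fun u => Real.exp (cumHaz c u - cumHaz b u - cumHaz a u))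
        ((c s - b s - a s) * Real.exp (cumHaz c s - cumHaz b s - cumHaz a s)) s := by
      intro s
      have h := (((cumHaz_hasDerivAt hc s).sub (cumHaz_hasDerivAt hb s)).sub
        (cumHaz_hasDerivAt ha s)).exp
      simp only [Pi.sub_apply, Pi.neg_apply] at h
      convert h using 1; ring
    rw [intervalIntegral.integral_eq_sub_of_hasDerivAt (fun s _ => this s)
      (((hc.sub hb |>.sub ha).mul hE).intervalIntegrable _ _)]
    simp [cumHaz_zero]
  -- rewrite second integrand
  have key : (∫ s in (0:ℝ)..t, Real.exp (-cumHaz b s - cumHaz a s) * a s *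
        (1 - Real.exp (-cumHaz1 (fun u _ => c u) t s)))
      = (∫ s in (0:ℝ)..t, Real.exp (-cumHaz b s - cumHaz a s) * a s)
        - Real.exp (-cumHaz c t) * ∫ s in (0:ℝ)..t, a s * Real.exp (cumHaz c s - cumHaz b s - cumHaz a s) := by
    rw [← intervalIntegral.integral_const_mul, ← intervalIntegral.integral_sub
      ((hD.fun_mul ha).intervalIntegrable _ _)
      ((continuous_const.fun_mul (ha.fun_mul hE)).intervalIntegrable _ _)]
    apply intervalIntegral.integral_congr
    intro s _
    dsimp only
    rw [cumHaz1_markov hc]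
    have h : Real.exp (-cumHaz b s - cumHaz a s) * Real.exp (-(cumHaz c t - cumHaz c s))
        = Real.exp (-cumHaz c t) * Real.exp (cumHaz c s - cumHaz b s - cumHaz a s) := by
      rw [← Real.exp_add, ← Real.exp_add]; ring_nf
    linear_combination (-(a s)) * h
  have split : (∫ s in (0:ℝ)..t, Real.exp (-cumHaz b s - cumHaz a s) * b s)
      + (∫ s in (0:ℝ)..t, Real.exp (-cumHaz b s - cumHaz a s) * a s)
      = ∫ s in (0:ℝ)..t, Real.exp (-cumHaz b s - cumHaz a s) * (b s + a s) := by
    rw [← intervalIntegral.integral_add ((hD.fun_mul hb).intervalIntegrable _ _)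
      ((hD.fun_mul ha).intervalIntegrable _ _)]
    congr 1; ext s; ring
  have split2 : (∫ s in (0:ℝ)..t, (c s - b s) * Real.exp (cumHaz c s - cumHaz b s - cumHaz a s))
      - (∫ s in (0:ℝ)..t, a s * Real.exp (cumHaz c s - cumHaz b s - cumHaz a s))
      = ∫ s in (0:ℝ)..t, (c s - b s - a s) * Real.exp (cumHaz c s - cumHaz b s - cumHaz a s) := by
    rw [← intervalIntegral.integral_sub (((hc.fun_sub hb).fun_mul hE).intervalIntegrable _ _)
      ((ha.fun_mul hE).intervalIntegrable _ _)]
    congr 1; ext s; ring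
  have hexp : Real.exp (-cumHaz c t) * Real.exp (cumHaz c t - cumHaz b t - cumHaz a t) = Real.exp (-cumHaz b t - cumHaz a t) := by
    rw [← Real.exp_add]; ring_nf
  rw [cif, key]
  linear_combination split + H1 + Real.exp (-cumHaz c t) * split2 + Real.exp (-cumHaz c t) * H2 + hexp
lemma cumHaz_mono {f g : ℝ → ℝ} (hf : Continuous f) (hg : Continuous g)
    (hle : ∀ u, f u ≤ g u) {s : ℝ} (hs : 0 ≤ s) : cumHaz f s ≤ cumHaz g s :=
  intervalIntegral.integral_mono_on hs (hf.intervalIntegrable _ _)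
    (hg.intervalIntegrable _ _) (fun u _ => hle u)

lemma cumHaz_nonneg {f : ℝ → ℝ} (hf : Continuous f) (hnn : ∀ u, 0 ≤ f u)
    {s : ℝ} (hs : 0 ≤ s) : 0 ≤ cumHaz f s := by
  have := cumHaz_mono continuous_const hf hnn hs
  simpa [cumHaz] using this

lemma step1 {a b c0 c1 : ℝ → ℝ} (ha : Continuous a) (hb : Continuous b)
    (hc0 : Continuous c0) (hc1 : Continuous c1) (hann : ∀ s, 0 ≤ a s)
    (hcle : ∀ s, c1 s ≤ c0 s) {t : ℝ} (ht : 0 ≤ t) :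
    cif a b (fun u _ => c1 u) t ≤ cif a b (fun u _ => c0 u) t := by
  unfold cif
  apply add_le_add le_rfl
  have hD : Continuous (fun s => Real.exp (-cumHaz b s - cumHaz a s)) := by
    have := cumHaz_continuous ha; have := cumHaz_continuous hb; fun_prop
  have hint : ∀ c : ℝ → ℝ, Continuous c → IntervalIntegrable (fun s =>
      Real.exp (-cumHaz b s - cumHaz a s) * a s *
        (1 - Real.exp (-cumHaz1 (fun u _ => c u) t s))) volume 0 t := by
    intro c hc
    apply ContinuousOn.intervalIntegrable
    apply Continuous.continuousOn
    have h1 : Continuous (fun s => cumHaz1 (fun u _ => c u) t s) := by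
      have heq : (fun s => cumHaz1 (fun u _ => c u) t s)
          = fun s => cumHaz c t - cumHaz c s := by
        funext s; exact cumHaz1_markov hc t s
      rw [heq]
      exact continuous_const.sub (cumHaz_continuous hc)
    fun_prop
  apply intervalIntegral.integral_mono_on ht (hint c1 hc1) (hint c0 hc0)
  intro s hs
  have hfac : 0 ≤ Real.exp (-cumHaz b s - cumHaz a s) * a s :=
    mul_nonneg (Real.exp_pos _).le (hann s)
  apply mul_le_mul_of_nonneg_left _ hfac
  apply sub_le_sub_left
  apply Real.exp_le_exp.2
  apply neg_le_neg
  rw [cumHaz1, cumHaz1]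
  exact intervalIntegral.integral_mono_on hs.2 (hc1.intervalIntegrable _ _)
    (hc0.intervalIntegrable _ _) (fun u _ => hcle u)

lemma step23 {a0 a1 b0 b1 c : ℝ → ℝ} (ha0 : Continuous a0) (ha1 : Continuous a1)
    (hb0 : Continuous b0) (hb1 : Continuous b1) (hc : Continuous c)
    (hale : ∀ s, a1 s ≤ a0 s) (hble : ∀ s, b1 s ≤ b0 s) (hbc : ∀ s, b1 s ≤ c s)
    {t : ℝ} (ht : 0 ≤ t) :
    cif a1 b1 (fun u _ => c u) t ≤ cif a0 b0 (fun u _ => c u) t := by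
  rw [cif_formula ha0 hb0 hc, cif_formula ha1 hb1 hc]
  have hE : ∀ (a b : ℝ → ℝ), Continuous a → Continuous b → Continuous (fun s =>
      (c s - b s) * Real.exp (cumHaz c s - cumHaz b s - cumHaz a s)) := by
    intro a b ha hb
    have := cumHaz_continuous ha; have := cumHaz_continuous hb
    have := cumHaz_continuous hc; fun_prop
  have key : (∫ s in (0:ℝ)..t,
        (c s - b0 s) * Real.exp (cumHaz c s - cumHaz b0 s - cumHaz a0 s))
      ≤ ∫ s in (0:ℝ)..t,
        (c s - b1 s) * Real.exp (cumHaz c s - cumHaz b1 s - cumHaz a1 s) := by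
    apply intervalIntegral.integral_mono_on ht
      ((hE a0 b0 ha0 hb0).intervalIntegrable _ _)
      ((hE a1 b1 ha1 hb1).intervalIntegrable _ _)
    intro s hs
    rcases le_or_gt (c s - b0 s) 0 with h | h
    · have hL : (c s - b0 s) * Real.exp (cumHaz c s - cumHaz b0 s - cumHaz a0 s) ≤ 0 :=
        mul_nonpos_of_nonpos_of_nonneg h (Real.exp_pos _).le
      have hR : 0 ≤ (c s - b1 s) * Real.exp (cumHaz c s - cumHaz b1 s - cumHaz a1 s) :=
        mul_nonneg (by linarith [hbc s]) (Real.exp_pos _).le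
      linarith
    · apply mul_le_mul (by linarith [hble s])
        (Real.exp_le_exp.2 (by
          have h1 := cumHaz_mono ha1 ha0 hale hs.1
          have h2 := cumHaz_mono hb1 hb0 hble hs.1
          linarith))
        (Real.exp_pos _).le (by linarith [hble s])
  have hpos := (Real.exp_pos (-cumHaz c t)).le
  nlinarith [key]
noncomputable def extF (f : ℝ → ℝ) : ℝ → ℝ := fun u => f (max u 0)

lemma extF_continuous {f : ℝ → ℝ} (hf : ContinuousOn f (Set.Ici 0)) :
    Continuous (extF f) :=
  hf.comp_continuous (continuous_id.max continuous_const) (fun x => Set.mem_Ici.2 (le_max_right _ _))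

lemma cumHaz_extF (f : ℝ → ℝ) {s : ℝ} (hs : 0 ≤ s) : cumHaz (extF f) s = cumHaz f s := by
  apply intervalIntegral.integral_congr
  intro u hu
  rw [Set.uIcc_of_le hs] at hu
  simp [extF, max_eq_left hu.1]

lemma cif_extF (a b c : ℝ → ℝ) {t : ℝ} (ht : 0 ≤ t) :
    cif (extF a) (extF b) (fun u _ => extF c u) t = cif a b (fun u _ => c u) t := by
  unfold cif
  congr 1
  · apply intervalIntegral.integral_congr
    intro s hs
    dsimp only
    rw [Set.uIcc_of_le ht] at hs
    rw [cumHaz_extF a hs.1, cumHaz_extF b hs.1]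
    simp [extF, max_eq_left hs.1]
  · apply intervalIntegral.integral_congr
    intro s hs
    dsimp only
    rw [Set.uIcc_of_le ht] at hs
    rw [cumHaz_extF a hs.1, cumHaz_extF b hs.1]
    have h1 : cumHaz1 (fun u _ => extF c u) t s = cumHaz1 (fun u _ => c u) t s := by
      apply intervalIntegral.integral_congr
      intro u hu
      rw [Set.uIcc_of_le hs.2] at hu
      simp [extF, max_eq_left (le_trans hs.1 hu.1)]
    rw [h1]
    simp [extF, max_eq_left hs.1]


/-- sign of the overall effect in the Markov case. If all three hazards
under treatment 1 are pointwise below those under treatment 0, and the intermediate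
event increases the terminal hazard under treatment 1, then `F¹(t) ≤ F⁰(t)`. -/
theorem cif_overall_sign_markov (lamS0 lam00 lam10 lamS1 lam01 lam11 : ℝ → ℝ)
    (hS0cont : ContinuousOn lamS0 (Set.Ici 0))
    (h00cont : ContinuousOn lam00 (Set.Ici 0))
    (h10cont : ContinuousOn lam10 (Set.Ici 0))
    (hS1cont : ContinuousOn lamS1 (Set.Ici 0))
    (h01cont : ContinuousOn lam01 (Set.Ici 0))
    (h11cont : ContinuousOn lam11 (Set.Ici 0))
    (hS0nn : ∀ t ∈ Set.Ici (0:ℝ), 0 ≤ lamS0 t)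
    (h00nn : ∀ t ∈ Set.Ici (0:ℝ), 0 ≤ lam00 t)
    (h10nn : ∀ t ∈ Set.Ici (0:ℝ), 0 ≤ lam10 t)
    (hS1nn : ∀ t ∈ Set.Ici (0:ℝ), 0 ≤ lamS1 t)
    (h01nn : ∀ t ∈ Set.Ici (0:ℝ), 0 ≤ lam01 t)
    (h11nn : ∀ t ∈ Set.Ici (0:ℝ), 0 ≤ lam11 t)
    (hSle : ∀ t ∈ Set.Ici (0:ℝ), lamS1 t ≤ lamS0 t)
    (h0le : ∀ t ∈ Set.Ici (0:ℝ), lam01 t ≤ lam00 t)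
    (h1le : ∀ t ∈ Set.Ici (0:ℝ), lam11 t ≤ lam10 t)
    (hmod : ∀ t ∈ Set.Ici (0:ℝ), lam01 t ≤ lam11 t) :
    ∀ t : ℝ, 0 ≤ t →
      cif lamS1 lam01 (fun u _ => lam11 u) t ≤ cif lamS0 lam00 (fun u _ => lam10 u) t := by
  intro t ht
  rw [← cif_extF lamS1 lam01 lam11 ht, ← cif_extF lamS0 lam00 lam10 ht]
  have mem : ∀ u : ℝ, max u 0 ∈ Set.Ici (0:ℝ) := fun u => Set.mem_Ici.2 (le_max_right _ _)
  calc cif (extF lamS1) (extF lam01) (fun u _ => extF lam11 u) t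
      ≤ cif (extF lamS0) (extF lam00) (fun u _ => extF lam11 u) t :=
        step23 (extF_continuous hS0cont) (extF_continuous hS1cont)
          (extF_continuous h00cont) (extF_continuous h01cont)
          (extF_continuous h11cont)
          (fun s => hSle _ (mem s)) (fun s => h0le _ (mem s))
          (fun s => hmod _ (mem s)) ht
    _ ≤ cif (extF lamS0) (extF lam00) (fun u _ => extF lam10 u) t :=
        step1 (extF_continuous hS0cont) (extF_continuous h00cont)
          (extF_continuous h10cont) (extF_continuous h11cont)
          (fun s => hS0nn _ (mem s)) (fun s => h1le _ (mem s)) ht
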